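/- Let m ≥ 2 be an integer and ε = 1/(2m). Let q ∈ ℝ^m be given by q_i = −1 for i ∈ {1,…,m−1} and q_m = 1 (so ‖q‖_∞ = 1). Then: (a) for every probability vector u ∈ ℝ^m, sup_{v∈[0,1]} [ u_m (M_m − v) − ∑_{i=1}^{m−1} u_i (M_i − v) ] ≥ ε; and (b) for the probability vector u* with u*_{m−1} = u*_m = 1/2 and u*_i = 0 otherwise, the expression u*_m(M_m − v) − ∑_{i=1}^{m−1} u*_i (M_i − v) equals ε for every v ∈ [0,1]. Hence min_u sup_{v∈[0,1]} [∑_i u_i q_i (M_i − v)] = ε = ε‖q‖_∞, i.e., the mixed game value Val(q) = 0. -/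
import Mathlib


/-- Gridpoint M_i = (2i-1)/(2m). -/
noncomputable def Mg (m i : ℕ) : ℝ := (2 * (i : ℝ) - 1) / (2 * m)

/-- For q with q_i = -1 (i < m) and q_m = 1, the payoff
∑_i u_i q_i (M_i − v) = u_m (M_m − v) − ∑_{i=1}^{m-1} u_i (M_i − v). -/
noncomputable def payoff (m : ℕ) (u : ℕ → ℝ) (v : ℝ) : ℝ :=
  u m * (Mg m m - v) - ∑ i ∈ Finset.Icc 1 (m - 1), u i * (Mg m i - v)

lemma Mg_mono {m i j : ℕ} (hm : 1 ≤ m) (hij : i ≤ j) : Mg m i ≤ Mg m j := by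
  have hm0 : (0:ℝ) < m := by exact_mod_cast Nat.lt_of_lt_of_le Nat.zero_lt_one hm
  have hij' : (i:ℝ) ≤ j := by exact_mod_cast hij
  unfold Mg
  gcongr

/-- from the proof of Lemma 4.9: for q = (−1,…,−1,1) with
‖q‖_∞ = 1 and ε = 1/(2m):
(a) every probability vector u has sup_{v∈[0,1]} ∑_i u_i q_i (M_i − v) ≥ ε, and
(b) the probability vector u* with u*_{m-1} = u*_m = 1/2 achieves payoff exactly
ε for every v ∈ [0,1].  Hence min_u sup_v ∑_i u_i q_i (M_i − v) = ε = ε‖q‖_∞,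
i.e. the mixed game value Val(q) = 0. -/
theorem mixed_game_value_zero (m : ℕ) (hm : 2 ≤ m) :
    (∀ u : ℕ → ℝ, (∀ i, 1 ≤ i → i ≤ m → 0 ≤ u i) →
      (∑ i ∈ Finset.Icc 1 m, u i) = 1 →
      1 / (2 * m) ≤ sSup ((fun v => payoff m u v) '' Set.Icc (0 : ℝ) 1)) ∧
    (∀ v ∈ Set.Icc (0 : ℝ) 1,
      payoff m (fun i => if i = m ∨ i = m - 1 then (1 : ℝ) / 2 else 0) v
        = 1 / (2 * m)) := by
  have hm1 : 1 ≤ m := le_trans one_le_two hm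
  have hmm : m - 1 + 1 = m := Nat.sub_add_cancel hm1
  have hmR : (2:ℝ) ≤ m := by exact_mod_cast hm
  have hm0 : (0:ℝ) < m := by linarith
  have hne : (m:ℝ) ≠ 0 := ne_of_gt hm0
  have hcast : ((m - 1 : ℕ) : ℝ) = (m : ℝ) - 1 := by
    push_cast [Nat.cast_sub hm1]; ring
  have hMgm : Mg m m = 1 - 1/(2*(m:ℝ)) := by
    unfold Mg; field_simp
  have hMgm1 : Mg m (m-1) = 1 - 3*(1/(2*(m:ℝ))) := by
    unfold Mg; rw [hcast]; field_simp; ring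
  have ht0 : (0:ℝ) < 1/(2*(m:ℝ)) := by positivity
  have ht4 : 1/(2*(m:ℝ)) ≤ 1/4 := by
    rw [div_le_div_iff₀ (by linarith) (by norm_num)]; linarith
  constructor
  · intro u hpos hsum
    have hsplit : ∑ i ∈ Finset.Icc 1 (m-1), u i = 1 - u m := by
      have h := Finset.sum_Icc_succ_top (a := 1) (b := m - 1)
        (by omega : 1 ≤ m - 1 + 1) u
      rw [hmm] at h
      rw [h] at hsum
      linarith
    have hum0 : 0 ≤ u m := hpos m hm1 le_rfl
    have hum1 : u m ≤ 1 := by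
      have hS0 : 0 ≤ ∑ i ∈ Finset.Icc 1 (m-1), u i :=
        Finset.sum_nonneg fun i hi => by
          have hi' := Finset.mem_Icc.mp hi
          exact hpos i hi'.1 (le_trans hi'.2 (Nat.sub_le m 1))
      linarith [hsplit ▸ hS0]
    have hbound : ∀ v : ℝ, ∑ i ∈ Finset.Icc 1 (m-1), u i * (Mg m i - v)
        ≤ (1 - u m) * (1 - 3*(1/(2*(m:ℝ))) - v) := by
      intro v
      calc ∑ i ∈ Finset.Icc 1 (m-1), u i * (Mg m i - v)
          ≤ ∑ i ∈ Finset.Icc 1 (m-1), u i * (Mg m (m-1) - v) := by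
            apply Finset.sum_le_sum
            intro i hi
            have hi' := Finset.mem_Icc.mp hi
            have hMle : Mg m i ≤ Mg m (m-1) := Mg_mono hm1 hi'.2
            have hui : 0 ≤ u i := hpos i hi'.1 (le_trans hi'.2 (Nat.sub_le m 1))
            exact mul_le_mul_of_nonneg_left (by linarith) hui
        _ = (∑ i ∈ Finset.Icc 1 (m-1), u i) * (Mg m (m-1) - v) := by
            rw [← Finset.sum_mul]
        _ = (1 - u m) * (1 - 3*(1/(2*(m:ℝ))) - v) := by rw [hsplit, hMgm1]
    have hcont : Continuous (fun v => payoff m u v) := by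
      unfold payoff
      apply Continuous.sub
      · fun_prop
      · exact continuous_finset_sum _ (fun i _ => by fun_prop)
    have hbdd : BddAbove ((fun v => payoff m u v) '' Set.Icc (0:ℝ) 1) :=
      (isCompact_Icc.image hcont).bddAbove
    by_cases hum : u m ≤ 1/2
    · have h1 : 1/(2*(m:ℝ)) ≤ payoff m u 1 := by
        have hb := hbound 1
        unfold payoff
        rw [hMgm]
        generalize 1/(2*(m:ℝ)) = t at ht0 hb ⊢
        nlinarith [mul_nonneg ht0.le (show (0:ℝ) ≤ 1 - 2 * u m by linarith)]
      have hmem : payoff m u 1 ∈ (fun v => payoff m u v) '' Set.Icc (0:ℝ) 1 :=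
        ⟨1, by norm_num, rfl⟩
      exact le_trans h1 (le_csSup hbdd hmem)
    · have h1 : 1/(2*(m:ℝ)) ≤ payoff m u 0 := by
        have hb := hbound 0
        unfold payoff
        rw [hMgm]
        generalize 1/(2*(m:ℝ)) = t at ht0 ht4 hb ⊢
        nlinarith [mul_nonneg (show (0:ℝ) ≤ 2 * u m - 1 by linarith)
          (show (0:ℝ) ≤ 1 - 2 * t by linarith)]
      have hmem : payoff m u 0 ∈ (fun v => payoff m u v) '' Set.Icc (0:ℝ) 1 :=
        ⟨0, by norm_num, rfl⟩
      exact le_trans h1 (le_csSup hbdd hmem)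
  · intro v hv
    unfold payoff
    have hsum : ∑ i ∈ Finset.Icc 1 (m-1),
        (if i = m ∨ i = m - 1 then (1:ℝ)/2 else 0) * (Mg m i - v)
        = (1/2) * (Mg m (m-1) - v) := by
      rw [Finset.sum_eq_single (m-1)]
      · rw [if_pos (Or.inr rfl)]
      · intro i hi hne'
        have hi' := Finset.mem_Icc.mp hi
        rw [if_neg, zero_mul]
        push_neg
        exact ⟨by omega, hne'⟩
      · intro h
        exact absurd (Finset.mem_Icc.mpr ⟨by omega, le_rfl⟩) h
    beta_reduce
    rw [hsum, if_pos (Or.inl rfl), hMgm, hMgm1]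
    ring
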